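/- arXiv:2505.15568 — 9 statements merged into one kernel-verified Lean document; each statement's English description precedes it below -/
import Mathlib

section
/- Generalized time-skip theorem (safety part): suppose Assumptions 1, 2, 3 and 4 hold and the index type 𝒳 of clocks is finite. Then the original real-time system refines the time-optimized system on non-clock components: for every behavior σ : ℕ → states with σ 0 ∈ Init such that for every i the pair (σ i, σ (i+1)) is a NextI step, an AdvanceTime_S step, or a stuttering step, there exists a behavior τ : ℕ → states with τ 0 ∈ Init such that for every i the pair (τ i, τ (i+1)) is a NextI step, an AdvanceTime_Ŝ step, or a stuttering step, and core (τ i) = core (σ i) for every i. -/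
open scoped Classical

universe u v

/-- A state of an explicit real-time system: a non-clock component and the clock values. -/
structure RTState (α : Type u) (𝒳 : Type v) where
  core : α
  clk : 𝒳 → ℕ

/-- An extended state: an underlying state together with the mapped-clock values. -/
structure RTEState (α : Type u) (𝒳 : Type v) where
  st : RTState α 𝒳
  m : 𝒳 → ℕ

namespace RT

variable {α : Type u} {𝒳 : Type v}

/-- `T x d s`: the state agreeing with `s` except that clock `x` has value `d`. -/
noncomputable def T (x : 𝒳) (d : ℕ) (s : RTState α 𝒳) : RTState α 𝒳 :=
  ⟨s.core, fun y => if y = x then d else s.clk y⟩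

/-- `𝒯^x_d` applied pointwise to a behavior. -/
noncomputable def Tb (x : 𝒳) (d : ℕ) (σ : ℕ → RTState α 𝒳) : ℕ → RTState α 𝒳 :=
  fun i => T x d (σ i)

/-- `N_S`: behaviors each of whose steps is a `NextI` step or a stuttering step. -/
def NS (NextI : RTState α 𝒳 → RTState α 𝒳 → Prop) : Set (ℕ → RTState α 𝒳) :=
  { σ | ∀ i, NextI (σ i) (σ (i + 1)) ∨ σ (i + 1) = σ i }

/-- `AdvanceTime_S`: all clocks advance by one, provided no time bound is hit. -/
def AdvanceTimeS (B : 𝒳 → RTState α 𝒳 → Set ℕ) (s t : RTState α 𝒳) : Prop :=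
  t.core = s.core ∧ (∀ x, t.clk x = s.clk x + 1) ∧ ∀ x, s.clk x ∉ B x s

/-- `ETP^x(s)`: points in time at which a newly possible behavior for state `s` exists. -/
def ETP (NextI : RTState α 𝒳 → RTState α 𝒳 → Prop) (x : 𝒳) (s : RTState α 𝒳) :
    Set ℕ :=
  { t | 1 ≤ t ∧ ∃ σ ∈ NS NextI, σ 0 = T x t s ∧ Tb x (t - 1) σ ∉ NS NextI }

/-- `AdvanceTime_Ŝ`: the time-optimized advance-time action. -/
def AdvanceTimeHat (B relETP : 𝒳 → RTState α 𝒳 → Set ℕ) (s t : RTState α 𝒳) : Prop :=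
  t.core = s.core ∧ (∃ x, s.clk x < t.clk x) ∧
    (∀ x, t.clk x = s.clk x ∨ (s.clk x < t.clk x ∧ t.clk x ∈ relETP x s)) ∧
    ∀ x, ∀ b ∈ B x s, s.clk x ≤ b → t.clk x ≤ b

/-- `Init'`: initial extended states, with mapped clocks equal to the clocks. -/
def EInit (Init : Set (RTState α 𝒳)) : Set (RTEState α 𝒳) :=
  { s' | s'.st ∈ Init ∧ ∀ x, s'.m x = s'.st.clk x }

/-- `NextI'`: internal step of the extended system, mapped clocks unchanged. -/
def ENextI (NextI : RTState α 𝒳 → RTState α 𝒳 → Prop) (s' t' : RTEState α 𝒳) : Prop :=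
  NextI s'.st t'.st ∧ ∀ x, t'.m x = s'.m x

/-- `AdvanceTime'`: extended advance-time step, updating the mapped clocks. -/
def EAdvanceTime (B relETP : 𝒳 → RTState α 𝒳 → Set ℕ) (s' t' : RTEState α 𝒳) : Prop :=
  AdvanceTimeS B s'.st t'.st ∧
    ∀ x, t'.m x = sSup ({s'.m x} ∪ { n ∈ relETP x s'.st | n ≤ t'.st.clk x })

/-- `T'^x_d`: set clock `x` of the underlying state to `d`; mapped clocks unchanged. -/
noncomputable def ET (x : 𝒳) (d : ℕ) (s' : RTEState α 𝒳) : RTEState α 𝒳 :=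
  ⟨T x d s'.st, s'.m⟩

/-- `𝒯'^x_d` applied pointwise to a behavior of extended states. -/
noncomputable def ETb (x : 𝒳) (d : ℕ) (σ : ℕ → RTEState α 𝒳) : ℕ → RTEState α 𝒳 :=
  fun i => ET x d (σ i)

/-- `N_{S'}`: extended behaviors in which every step is a `NextI'` step or stuttering. -/
def ENS (NextI : RTState α 𝒳 → RTState α 𝒳 → Prop) : Set (ℕ → RTEState α 𝒳) :=
  { σ | ∀ i, ENextI NextI (σ i) (σ (i + 1)) ∨ σ (i + 1) = σ i }

/-- `n^x(s')`, an element of `ℕ∞` (`sInf ∅ = ⊤`), with truncated subtraction on `ℕ`. -/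
noncomputable def nfun (NextI : RTState α 𝒳 → RTState α 𝒳 → Prop) (x : 𝒳)
    (s' : RTEState α 𝒳) : ℕ∞ :=
  sInf ((fun n : ℕ => (n : ℕ∞)) ''
    { n : ℕ | ∃ σ ∈ ENS NextI, σ 0 = ET x (s'.st.clk x - n) s' ∧
        ETb x (s'.st.clk x - n - 1) σ ∉ ENS NextI })

/-- The invariant `Inv`: `s'.x ≤ s'.m^x + n^x(s')` in `ℕ∞` for every clock `x`. -/
def Inv (NextI : RTState α 𝒳 → RTState α 𝒳 → Prop) (s' : RTEState α 𝒳) : Prop :=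
  ∀ x, (s'.st.clk x : ℕ∞) ≤ (s'.m x : ℕ∞) + nfun NextI x s'

/-- `bar(s')`: the state with the core of `st s'` and every clock set to its mapped value. -/
def bar (s' : RTEState α 𝒳) : RTState α 𝒳 :=
  ⟨s'.st.core, s'.m⟩

/-- A step of the extended system: `NextI'`, `AdvanceTime'`, or stuttering. -/
def EStep (NextI : RTState α 𝒳 → RTState α 𝒳 → Prop)
    (B relETP : 𝒳 → RTState α 𝒳 → Set ℕ) (s' t' : RTEState α 𝒳) : Prop :=
  ENextI NextI s' t' ∨ EAdvanceTime B relETP s' t' ∨ t' = s'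

/-- An extended state is reachable iff it arises from `Init'` by finitely many steps. -/
def EReachable (Init : Set (RTState α 𝒳)) (NextI : RTState α 𝒳 → RTState α 𝒳 → Prop)
    (B relETP : 𝒳 → RTState α 𝒳 → Set ℕ) (s' : RTEState α 𝒳) : Prop :=
  ∃ i ∈ EInit Init, Relation.ReflTransGen (EStep NextI B relETP) i s'

/-- Replace the values of the clocks in the set `Y` by their mapped-clock values. -/
noncomputable def replaceClocks (Y : Set 𝒳) (s' : RTEState α 𝒳) : RTEState α 𝒳 :=
  ⟨⟨s'.st.core, fun x => if x ∈ Y then s'.m x else s'.st.clk x⟩, s'.m⟩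

end RT

section Aux

variable {α : Type u} {𝒳 : Type v}

lemma aux_T_T (x : 𝒳) (d d' : ℕ) (s : RTState α 𝒳) :
    RT.T x d (RT.T x d' s) = RT.T x d s := by
  unfold RT.T
  congr 1
  funext y
  by_cases h : y = x <;> simp [h]

lemma aux_T_self (x : 𝒳) (s : RTState α 𝒳) : RT.T x (s.clk x) s = s := by
  unfold RT.T
  cases s with
  | mk c k =>
    congr 1
    funext y
    by_cases h : y = x <;> simp [h]

lemma aux_T_core (x : 𝒳) (d : ℕ) (s : RTState α 𝒳) : (RT.T x d s).core = s.core := rfl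

/-- Lowering a single clock preserves a `NextI` step, provided no ETP point is skipped. -/
lemma lower_single (NextI : RTState α 𝒳 → RTState α 𝒳 → Prop) {s t : RTState α 𝒳}
    (h : NextI s t) (hcore : s.core ≠ t.core) (x : 𝒳) (hclk : t.clk x = s.clk x)
    (m : ℕ) (hm : m ≤ s.clk x)
    (H : ∀ e, m < e → e ≤ s.clk x → e ∉ RT.ETP NextI x s) :
    NextI (RT.T x m s) (RT.T x m t) := by
  have key : ∀ j, m ≤ s.clk x - j →
      NextI (RT.T x (s.clk x - j) s) (RT.T x (s.clk x - j) t) := by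
    intro j
    induction j with
    | zero =>
      intro _
      have hs : RT.T x (s.clk x - 0) s = s := by
        simpa using aux_T_self x s
      have ht : RT.T x (s.clk x - 0) t = t := by
        have := aux_T_self x t
        rw [hclk] at this
        simpa using this
      rw [hs, ht]; exact h
    | succ j ih =>
      intro hmj
      by_cases h0 : s.clk x - j = 0
      · have : s.clk x - (j + 1) = s.clk x - j := by omega
        rw [this]
        exact ih (by omega)
      · have hj : m ≤ s.clk x - j := by omega
        have ihj := ih hj
        have he1 : 1 ≤ s.clk x - j := by omega
        have hee : s.clk x - (j + 1) = (s.clk x - j) - 1 := by omega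
        rw [hee]
        by_contra hN
        apply H (s.clk x - j) (by omega) (by omega)
        refine ⟨he1, fun i => if i = 0 then RT.T x (s.clk x - j) s
            else RT.T x (s.clk x - j) t, ?_, ?_, ?_⟩
        · intro i
          cases i with
          | zero => left; simpa using ihj
          | succ n => right; simp
        · simp
        · intro hNS
          have h0' := hNS 0
          have e0 : RT.Tb x (s.clk x - j - 1) (fun i => if i = 0 then
              RT.T x (s.clk x - j) s else RT.T x (s.clk x - j) t) 0
              = RT.T x (s.clk x - j - 1) s := by
            simp [RT.Tb, aux_T_T]
          have e1 : RT.Tb x (s.clk x - j - 1) (fun i => if i = 0 then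
              RT.T x (s.clk x - j) s else RT.T x (s.clk x - j) t) 1
              = RT.T x (s.clk x - j - 1) t := by
            simp [RT.Tb, aux_T_T]
          rw [show (0 : ℕ) + 1 = 1 from rfl] at h0'
          rw [e0, e1] at h0'
          rcases h0' with h0' | h0'
          · exact hN h0'
          · exact hcore ((congrArg RTState.core h0').symm)
  have := key (s.clk x - m) (by omega)
  have hmm : s.clk x - (s.clk x - m) = m := by omega
  rwa [hmm] at this

/-- Lowering all clocks preserves a `NextI` step. -/
lemma lower_clocks [Finite 𝒳] (NextI : RTState α 𝒳 → RTState α 𝒳 → Prop)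
    {s t : RTState α 𝒳} (h : NextI s t) (hcore : s.core ≠ t.core)
    (hclk : ∀ x, t.clk x = s.clk x) (μ : 𝒳 → ℕ) (hμ : ∀ x, μ x ≤ s.clk x)
    (H : ∀ (x : 𝒳) (s' : RTState α 𝒳), s'.core = s.core → s'.clk x = s.clk x →
      ∀ e, μ x < e → e ≤ s.clk x → e ∉ RT.ETP NextI x s') :
    NextI ⟨s.core, μ⟩ ⟨t.core, μ⟩ := by
  classical
  have : Fintype 𝒳 := Fintype.ofFinite 𝒳
  set rep : Finset 𝒳 → RTState α 𝒳 → RTState α 𝒳 :=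
    fun Y r => ⟨r.core, fun y => if y ∈ Y then μ y else r.clk y⟩ with hrep
  have key : ∀ Y : Finset 𝒳, NextI (rep Y s) (rep Y t) := by
    intro Y
    induction Y using Finset.induction_on with
    | empty =>
      have hs : rep ∅ s = s := by
        simp only [hrep, Finset.notMem_empty, if_neg (fun h => h)]
      have ht : rep ∅ t = t := by
        simp only [hrep, Finset.notMem_empty, if_neg (fun h => h)]
      rw [hs, ht]; exact h
    | @insert x Y hx ih =>
      have h1 : rep (insert x Y) s = RT.T x (μ x) (rep Y s) := by
        simp only [hrep, RT.T]
        congr 1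
        funext y
        by_cases hxy : y = x
        · subst hxy; simp
        · simp [hxy, Finset.mem_insert]
      have h2 : rep (insert x Y) t = RT.T x (μ x) (rep Y t) := by
        simp only [hrep, RT.T]
        congr 1
        funext y
        by_cases hxy : y = x
        · subst hxy; simp
        · simp [hxy, Finset.mem_insert]
      have hcx : (rep Y s).clk x = s.clk x := by simp [hrep, hx]
      have hcx' : (rep Y t).clk x = (rep Y s).clk x := by
        simp [hrep, hx, hclk x]
      rw [h1, h2]
      exact lower_single NextI ih hcore x hcx' (μ x) (by rw [hcx]; exact hμ x)
        (by
          intro e he1 he2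
          rw [hcx] at he2
          exact H x (rep Y s) rfl hcx e he1 he2)
  have huniv := key Finset.univ
  have hs : rep Finset.univ s = ⟨s.core, μ⟩ := by simp [hrep]
  have ht : rep Finset.univ t = ⟨t.core, μ⟩ := by simp [hrep]
  rwa [hs, ht] at huniv

/-- The mapped-clock values along a behavior. -/
noncomputable def muAux (B relETP : 𝒳 → RTState α 𝒳 → Set ℕ)
    (σ : ℕ → RTState α 𝒳) : ℕ → 𝒳 → ℕ
  | 0 => (σ 0).clk
  | i + 1 =>
    if RT.AdvanceTimeS B (σ i) (σ (i + 1)) then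
      fun x => max (muAux B relETP σ i x)
        (sSup {n | n ∈ relETP x (σ i) ∧ n ≤ (σ (i + 1)).clk x})
    else muAux B relETP σ i

end Aux

theorem generalized_time_skip_safety {α : Type u} {𝒳 : Type v} [Finite 𝒳]
    (Init : Set (RTState α 𝒳)) (NextI : RTState α 𝒳 → RTState α 𝒳 → Prop)
    (B relETP : 𝒳 → RTState α 𝒳 → Set ℕ)
    (hClk : ∀ s t, NextI s t → ∀ x, t.clk x = s.clk x)
    (hA1 : ∀ (x : 𝒳) (d : ℕ) (s : RTState α 𝒳), B x (RT.T x d s) = B x s)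
    (hA2 : ∀ (x : 𝒳) (s : RTState α 𝒳), RT.ETP NextI x s ⊆ relETP x s ∧
      { n | ∃ b ∈ B x s, n = b + 1 } ⊆ relETP x s)
    (hA3 : ∀ (x : 𝒳) (s t : RTState α 𝒳), s.core = t.core →
      B x s = B x t ∧ relETP x s = relETP x t)
    (hA4 : ∀ s t, NextI s t → ∀ (x : 𝒳), ∀ n ∈ relETP x t, n ≤ t.clk x → n ∈ relETP x s)
    (σ : ℕ → RTState α 𝒳) (hI : σ 0 ∈ Init)
    (hσ : ∀ i, NextI (σ i) (σ (i + 1)) ∨ RT.AdvanceTimeS B (σ i) (σ (i + 1)) ∨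
      σ (i + 1) = σ i) :
    ∃ τ : ℕ → RTState α 𝒳, τ 0 ∈ Init ∧
      (∀ i, NextI (τ i) (τ (i + 1)) ∨ RT.AdvanceTimeHat B relETP (τ i) (τ (i + 1)) ∨
        τ (i + 1) = τ i) ∧
      ∀ i, (τ i).core = (σ i).core := by
  classical
  set μ : ℕ → 𝒳 → ℕ := muAux B relETP σ with hμdef
  -- μ is unchanged across NextI steps
  have hmu_next : ∀ i, NextI (σ i) (σ (i + 1)) → ∀ x, μ (i + 1) x = μ i x := by
    intro i hN x
    show muAux B relETP σ (i + 1) x = muAux B relETP σ i x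
    rw [muAux]
    split
    · next hAdv =>
      have h1 := hAdv.2.1 x
      have h2 := hClk _ _ hN x
      omega
    · rfl
  -- μ is unchanged across stuttering steps
  have hmu_st : ∀ i, σ (i + 1) = σ i → ∀ x, μ (i + 1) x = μ i x := by
    intro i hst x
    show muAux B relETP σ (i + 1) x = muAux B relETP σ i x
    rw [muAux]
    split
    · next hAdv =>
      have h1 := hAdv.2.1 x
      rw [hst] at h1
      omega
    · rfl
  -- μ in the advance-time case
  have hmu_adv : ∀ i, RT.AdvanceTimeS B (σ i) (σ (i + 1)) → ∀ x,
      μ (i + 1) x = max (μ i x)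
        (sSup {n | n ∈ relETP x (σ i) ∧ n ≤ (σ (i + 1)).clk x}) := by
    intro i hAdv x
    show muAux B relETP σ (i + 1) x = _
    rw [muAux, if_pos hAdv]
  -- the invariant
  have inv : ∀ i, (∀ x, μ i x ≤ (σ i).clk x) ∧
      (∀ x n, n ∈ relETP x (σ i) → n ≤ (σ i).clk x → n ≤ μ i x) := by
    intro i
    induction i with
    | zero => exact ⟨fun x => le_rfl, fun x n _ hn => hn⟩
    | succ i ih =>
      rcases hσ i with hN | hAdv | hst
      · -- NextI step
        refine ⟨fun x => ?_, fun x n hn hle => ?_⟩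
        · rw [hmu_next i hN x, hClk _ _ hN x]; exact ih.1 x
        · rw [hmu_next i hN x]
          rw [hClk _ _ hN x] at hle
          exact ih.2 x n (hA4 _ _ hN x n hn (by rw [hClk _ _ hN x]; exact hle)) hle
      · -- advance-time step
        have hcq : (σ i).core = (σ (i + 1)).core := hAdv.1.symm
        have hrel : ∀ x, relETP x (σ (i + 1)) = relETP x (σ i) :=
          fun x => ((hA3 x _ _ hcq).2).symm
        have hbdd : ∀ x, BddAbove {n | n ∈ relETP x (σ i) ∧ n ≤ (σ (i + 1)).clk x} :=
          fun x => ⟨(σ (i + 1)).clk x, fun n hn => hn.2⟩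
        refine ⟨fun x => ?_, fun x n hn hle => ?_⟩
        · rw [hmu_adv i hAdv x]
          have h1 : μ i x ≤ (σ i).clk x := ih.1 x
          have h2 : sSup {n | n ∈ relETP x (σ i) ∧ n ≤ (σ (i + 1)).clk x}
              ≤ (σ (i + 1)).clk x := csSup_le' (fun n hn => hn.2)
          have h3 := hAdv.2.1 x
          omega
        · rw [hmu_adv i hAdv x]
          have hmem : n ∈ {n | n ∈ relETP x (σ i) ∧ n ≤ (σ (i + 1)).clk x} :=
            ⟨by rw [← hrel x]; exact hn, hle⟩
          exact le_trans (le_csSup (hbdd x) hmem) (le_max_right _ _)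
      · -- stuttering step
        refine ⟨fun x => ?_, fun x n hn hle => ?_⟩
        · rw [hmu_st i hst x, hst]; exact ih.1 x
        · rw [hmu_st i hst x]
          rw [hst] at hn hle
          exact ih.2 x n hn hle
  refine ⟨fun i => ⟨(σ i).core, μ i⟩, ?_, ?_, fun i => rfl⟩
  · show (⟨(σ 0).core, μ 0⟩ : RTState α 𝒳) ∈ Init
    have h0 : μ 0 = (σ 0).clk := rfl
    rw [h0]
    exact hI
  · intro i
    rcases hσ i with hN | hAdv | hst
    · -- NextI step
      have hμeq : μ (i + 1) = μ i := funext (hmu_next i hN)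
      by_cases hcq : (σ (i + 1)).core = (σ i).core
      · right; right
        show (⟨(σ (i + 1)).core, μ (i + 1)⟩ : RTState α 𝒳) = ⟨(σ i).core, μ i⟩
        rw [hμeq, hcq]
      · left
        show NextI (⟨(σ i).core, μ i⟩ : RTState α 𝒳) ⟨(σ (i + 1)).core, μ (i + 1)⟩
        rw [hμeq]
        exact lower_clocks NextI hN (fun h => hcq h.symm) (hClk _ _ hN) (μ i) (inv i).1
          (by
            intro x s' hc hck e he1 he2 hmem
            have h1 : e ∈ relETP x s' := (hA2 x s').1 hmem
            have h2 : relETP x s' = relETP x (σ i) := (hA3 x s' (σ i) hc).2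
            rw [h2] at h1
            have := (inv i).2 x e h1 he2
            omega)
    · -- advance-time step
      have hcq : (σ (i + 1)).core = (σ i).core := hAdv.1
      by_cases hall : ∀ x, μ (i + 1) x = μ i x
      · right; right
        show (⟨(σ (i + 1)).core, μ (i + 1)⟩ : RTState α 𝒳) = ⟨(σ i).core, μ i⟩
        rw [funext hall, hcq]
      · right; left
        show RT.AdvanceTimeHat B relETP (⟨(σ i).core, μ i⟩ : RTState α 𝒳)
          ⟨(σ (i + 1)).core, μ (i + 1)⟩
        push_neg at hall
        obtain ⟨x₀, hx₀⟩ := hall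
        have hbdd : ∀ x, BddAbove {n | n ∈ relETP x (σ i) ∧ n ≤ (σ (i + 1)).clk x} :=
          fun x => ⟨(σ (i + 1)).clk x, fun n hn => hn.2⟩
        have hrelτ : ∀ x, relETP x (⟨(σ i).core, μ i⟩ : RTState α 𝒳)
            = relETP x (σ i) := fun x => (hA3 x ⟨(σ i).core, μ i⟩ (σ i) rfl).2
        have hBτ : ∀ x, B x (⟨(σ i).core, μ i⟩ : RTState α 𝒳) = B x (σ i) :=
          fun x => (hA3 x ⟨(σ i).core, μ i⟩ (σ i) rfl).1
        -- when μ strictly increases, its new value is the sSup and lies in relETP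
        have hincr : ∀ x, μ (i + 1) x ≠ μ i x →
            μ i x < μ (i + 1) x ∧ μ (i + 1) x ∈ relETP x (σ i) := by
          intro x hne
          have heq := hmu_adv i hAdv x
          set S := {n | n ∈ relETP x (σ i) ∧ n ≤ (σ (i + 1)).clk x} with hS
          have hlt : μ i x < sSup S := by
            rcases lt_or_ge (μ i x) (sSup S) with h | h
            · exact h
            · rw [heq, max_eq_left h] at hne; exact absurd rfl hne
          have hmax : μ (i + 1) x = sSup S := by
            rw [heq]; omega
          have hne' : S.Nonempty := by
            by_contra hemp
            rw [Set.not_nonempty_iff_eq_empty] at hemp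
            rw [hemp, csSup_empty] at hlt
            simp at hlt
          have hmem := Nat.sSup_mem hne' (hbdd x)
          exact ⟨by omega, by rw [hmax]; exact hmem.1⟩
        refine ⟨hcq, ⟨x₀, (hincr x₀ hx₀).1⟩, fun x => ?_, fun x b hb hμb => ?_⟩
        · by_cases hne : μ (i + 1) x = μ i x
          · exact Or.inl hne
          · exact Or.inr ⟨(hincr x hne).1, by rw [hrelτ x]; exact (hincr x hne).2⟩
        · -- the bound condition
          rw [hBτ x] at hb
          have hμb' : μ i x ≤ b := hμb
          have hnb : (σ i).clk x ∉ B x (σ i) := hAdv.2.2 x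
          have hbcl : (σ i).clk x < b := by
            rcases lt_or_ge ((σ i).clk x) b with h | h
            · exact h
            · rcases lt_or_eq_of_le h with h' | h'
              · exfalso
                have hb1 : b + 1 ∈ relETP x (σ i) := (hA2 x (σ i)).2 ⟨b, hb, rfl⟩
                have := (inv i).2 x (b + 1) hb1 (by omega)
                omega
              · exact absurd (h' ▸ hb) hnb
          have heq := hmu_adv i hAdv x
          have h2 : sSup {n | n ∈ relETP x (σ i) ∧ n ≤ (σ (i + 1)).clk x}
              ≤ (σ (i + 1)).clk x := csSup_le' (fun n hn => hn.2)
          have h3 := hAdv.2.1 x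
          show μ (i + 1) x ≤ b
          rw [heq]
          exact max_le hμb' (by omega)
    · -- stuttering step
      right; right
      show (⟨(σ (i + 1)).core, μ (i + 1)⟩ : RTState α 𝒳) = ⟨(σ i).core, μ i⟩
      have hμeq : μ (i + 1) = μ i := funext (hmu_st i hst)
      rw [hμeq, hst]
end

section
/- History-variable extension lemma (Spec_S implements Spec_{S'}): for every behavior σ : ℕ → states with σ 0 ∈ Init such that for every i the pair (σ i, σ (i+1)) is a NextI step, an AdvanceTime_S step, or a stuttering step, there exists a behavior σ' of extended states with σ' 0 ∈ Init', st (σ' i) = σ i for every i, and such that for every i the pair (σ' i, σ' (i+1)) is a NextI' step, an AdvanceTime' step, or a stuttering step. -/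
open scoped Classical

universe u v

theorem history_variable_extension {α : Type u} {𝒳 : Type v}
    (Init : Set (RTState α 𝒳)) (NextI : RTState α 𝒳 → RTState α 𝒳 → Prop)
    (B relETP : 𝒳 → RTState α 𝒳 → Set ℕ)
    (hClk : ∀ s t, NextI s t → ∀ x, t.clk x = s.clk x)
    (σ : ℕ → RTState α 𝒳) (hI : σ 0 ∈ Init)
    (hσ : ∀ i, NextI (σ i) (σ (i + 1)) ∨ RT.AdvanceTimeS B (σ i) (σ (i + 1)) ∨
      σ (i + 1) = σ i) :
    ∃ σ' : ℕ → RTEState α 𝒳, σ' 0 ∈ RT.EInit Init ∧ (∀ i, (σ' i).st = σ i) ∧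
      ∀ i, RT.ENextI NextI (σ' i) (σ' (i + 1)) ∨
        RT.EAdvanceTime B relETP (σ' i) (σ' (i + 1)) ∨ σ' (i + 1) = σ' i := by
  classical
  let M : ℕ → 𝒳 → ℕ := fun i => Nat.rec (σ 0).clk
    (fun j prev => if RT.AdvanceTimeS B (σ j) (σ (j + 1)) then
      fun x => sSup ({prev x} ∪ { n ∈ relETP x (σ j) | n ≤ (σ (j + 1)).clk x })
      else prev) i
  refine ⟨fun i => ⟨σ i, M i⟩, ⟨hI, fun x => rfl⟩, fun i => rfl, fun i => ?_⟩
  by_cases hA : RT.AdvanceTimeS B (σ i) (σ (i + 1))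
  · right; left
    refine ⟨hA, fun x => ?_⟩
    show M (i + 1) x = _
    simp only [M, hA, if_pos]
  · have hM : M (i + 1) = M i := by simp only [M, hA, if_neg, not_false_iff]
    rcases hσ i with h | h | h
    · exact Or.inl ⟨h, fun x => congrFun hM x⟩
    · exact absurd h hA
    · right; right
      show (⟨σ (i+1), M (i+1)⟩ : RTEState α 𝒳) = ⟨σ i, M i⟩
      rw [h, hM]
end

section
/- Theorem (Spec_{S'} implements the barred time-optimized specification, safety part): suppose Assumptions 1, 2, 3 and 4 hold and the index type 𝒳 of clocks is finite. For every behavior σ' of extended states with σ' 0 ∈ Init' such that for every i the pair (σ' i, σ' (i+1)) is a NextI' step, an AdvanceTime' step, or a stuttering step, the projected behavior i ↦ bar(σ' i) satisfies: bar(σ' 0) ∈ Init, and for every i the pair (bar(σ' i), bar(σ' (i+1))) is a NextI step, an AdvanceTime_Ŝ step, or a stuttering step. -/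
open scoped Classical

universe u v

namespace RTAux
open RT

variable {α : Type u} {𝒳 : Type v}

lemma stext {s t : RTState α 𝒳} (h1 : s.core = t.core) (h2 : s.clk = t.clk) : s = t := by
  cases s; cases t; simp_all

lemma estext {s t : RTEState α 𝒳} (h1 : s.st = t.st) (h2 : s.m = t.m) : s = t := by
  cases s; cases t; simp_all

/-- Replace the clocks in `Y` by the values prescribed by `m`. -/
noncomputable def RB (m : 𝒳 → ℕ) (Y : Set 𝒳) (s : RTState α 𝒳) : RTState α 𝒳 :=
  ⟨s.core, fun z => if z ∈ Y then m z else s.clk z⟩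

@[simp] lemma RB_core (m : 𝒳 → ℕ) (Y : Set 𝒳) (s : RTState α 𝒳) :
    (RB m Y s).core = s.core := rfl

@[simp] lemma RB_clk (m : 𝒳 → ℕ) (Y : Set 𝒳) (s : RTState α 𝒳) (z : 𝒳) :
    (RB m Y s).clk z = if z ∈ Y then m z else s.clk z := rfl

@[simp] lemma T_core' (x : 𝒳) (d : ℕ) (s : RTState α 𝒳) : (T x d s).core = s.core := rfl

@[simp] lemma T_clk' (x : 𝒳) (d : ℕ) (s : RTState α 𝒳) (y : 𝒳) :
    (T x d s).clk y = if y = x then d else s.clk y := rfl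

lemma T_T (x : 𝒳) (d e : ℕ) (s : RTState α 𝒳) : T x e (T x d s) = T x e s := by
  refine stext rfl (funext fun y => ?_)
  by_cases h : y = x <;> simp [h]

lemma T_self {x : 𝒳} {d : ℕ} {s : RTState α 𝒳} (h : s.clk x = d) : T x d s = s := by
  refine stext rfl (funext fun y => ?_)
  by_cases hy : y = x
  · subst hy; simp [h]
  · simp [hy]

lemma RB_empty (m : 𝒳 → ℕ) (s : RTState α 𝒳) : RB m ∅ s = s := by
  refine stext rfl (funext fun y => ?_); simp

lemma RB_univ (m : 𝒳 → ℕ) (s : RTState α 𝒳) : RB m Set.univ s = ⟨s.core, m⟩ := by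
  refine stext rfl (funext fun y => ?_); simp

lemma RB_insert (m : 𝒳 → ℕ) (Y : Set 𝒳) (x : 𝒳) (s : RTState α 𝒳) :
    RB m (insert x Y) s = T x (m x) (RB m Y s) := by
  refine stext rfl (funext fun y => ?_)
  by_cases hy : y = x
  · subst hy; simp
  · by_cases hY : y ∈ Y <;> simp [hy, hY]

lemma repl_st (Y : Set 𝒳) (s' : RTEState α 𝒳) :
    (replaceClocks Y s').st = RB s'.m Y s'.st := rfl

variable {NextI : RTState α 𝒳 → RTState α 𝒳 → Prop}

lemma clk_const (hClk : ∀ s t, NextI s t → ∀ x, t.clk x = s.clk x)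
    {σ : ℕ → RTState α 𝒳} (hσ : σ ∈ NS NextI) (i : ℕ) (x : 𝒳) :
    (σ i).clk x = (σ 0).clk x := by
  induction i with
  | zero => rfl
  | succ j ih =>
    rcases hσ j with h | h
    · rw [hClk _ _ h x, ih]
    · rw [h, ih]

lemma proj_NS {σ : ℕ → RTEState α 𝒳} (hσ : σ ∈ ENS NextI) :
    (fun i => (σ i).st) ∈ NS NextI := by
  intro i
  rcases hσ i with h | h
  · exact Or.inl h.1
  · exact Or.inr (by simp only []; rw [h])

lemma m_const {σ : ℕ → RTEState α 𝒳} (hσ : σ ∈ ENS NextI) (i : ℕ) :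
    (σ i).m = (σ 0).m := by
  induction i with
  | zero => rfl
  | succ j ih =>
    rcases hσ j with h | h
    · rw [← ih]; exact funext h.2
    · rw [h, ih]

lemma lift_ENS {σ : ℕ → RTEState α 𝒳} (hm : ∀ i, (σ i).m = (σ 0).m)
    (hst : (fun i => (σ i).st) ∈ NS NextI) : σ ∈ ENS NextI := by
  intro i
  rcases hst i with h | h
  · exact Or.inl ⟨h, fun x => by rw [hm (i + 1), hm i]⟩
  · exact Or.inr (estext h (by rw [hm (i + 1), hm i]))

lemma shift_ENS {σ : ℕ → RTEState α 𝒳} (hσ : σ ∈ ENS NextI) :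
    (fun i => σ (i + 1)) ∈ ENS NextI := fun i => hσ (i + 1)

lemma le_add_sInf {A : Set ℕ} {c m : ℕ} (h : ∀ n ∈ A, c ≤ m + n) :
    (c : ℕ∞) ≤ (m : ℕ∞) + sInf ((fun n : ℕ => (n : ℕ∞)) '' A) := by
  rcases A.eq_empty_or_nonempty with rfl | hne
  · simp
  · have h1 := Nat.sInf_mem hne
    have h2 : ((sInf A : ℕ) : ℕ∞) ≤ sInf ((fun n : ℕ => (n : ℕ∞)) '' A) :=
      le_sInf (by rintro b ⟨k, hk, rfl⟩; simp only []; exact_mod_cast Nat.sInf_le hk)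
    calc (c : ℕ∞) ≤ (m : ℕ∞) + ((sInf A : ℕ) : ℕ∞) := by exact_mod_cast h _ h1
      _ ≤ _ := add_le_add le_rfl h2

lemma inv_le_of_mem {x : 𝒳} {u' : RTEState α 𝒳}
    (hInv : Inv NextI u') {n : ℕ}
    (hn : ∃ τ ∈ ENS NextI, τ 0 = ET x (u'.st.clk x - n) u' ∧
        ETb x (u'.st.clk x - n - 1) τ ∉ ENS NextI) :
    u'.st.clk x ≤ u'.m x + n := by
  have h1 : nfun NextI x u' ≤ (n : ℕ∞) := by
    unfold RT.nfun
    exact sInf_le ⟨n, hn, rfl⟩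
  have h2 := (hInv x).trans (add_le_add le_rfl h1)
  exact_mod_cast h2

lemma lower_clock (hClk : ∀ s t, NextI s t → ∀ x, t.clk x = s.clk x)
    (s' : RTEState α 𝒳) {Y : Set 𝒳} {x : 𝒳} (hx : x ∉ Y)
    (hInv : Inv NextI (replaceClocks Y s'))
    {σ : ℕ → RTState α 𝒳} (hσ : σ ∈ NS NextI) (h0 : σ 0 = s'.st)
    (hσY : (fun i => RB s'.m Y (σ i)) ∈ NS NextI) :
    ∀ d, s'.m x ≤ d → d ≤ s'.st.clk x →
      (fun i => T x d (RB s'.m Y (σ i))) ∈ NS NextI := by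
  set c := s'.st.clk x with hc
  have hclkY : ∀ i, (RB s'.m Y (σ i)).clk x = c := by
    intro i
    have h1 := clk_const hClk hσ i x
    rw [RB_clk, if_neg hx, h1, h0]
  have hreplclk : (replaceClocks Y s').st.clk x = c := by
    show (if x ∈ Y then s'.m x else s'.st.clk x) = c
    rw [if_neg hx]
  suffices H : ∀ k, s'.m x ≤ c - k → (fun i => T x (c - k) (RB s'.m Y (σ i))) ∈ NS NextI by
    intro d hd1 hd2
    have hdd : d = c - (c - d) := by omega
    rw [hdd]
    exact H (c - d) (by omega)
  intro k
  induction k with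
  | zero =>
    intro _
    have he : (fun i => T x (c - 0) (RB s'.m Y (σ i))) = fun i => RB s'.m Y (σ i) := by
      funext i
      rw [Nat.sub_zero]
      exact T_self (hclkY i)
    rw [he]
    exact hσY
  | succ k ih =>
    intro hk
    by_cases hkc : c ≤ k
    · have he : c - (k + 1) = c - k := by omega
      rw [he]
      exact ih (by omega)
    · have hk1 : k + 1 ≤ c := by omega
      have hE : (fun i => T x (c - k) (RB s'.m Y (σ i))) ∈ NS NextI := ih (by omega)
      by_contra hD
      have hmem : k ∈ {n : ℕ | ∃ τ ∈ ENS NextI,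
          τ 0 = ET x ((replaceClocks Y s').st.clk x - n) (replaceClocks Y s') ∧
          ETb x ((replaceClocks Y s').st.clk x - n - 1) τ ∉ ENS NextI} := by
        refine ⟨fun i => ⟨T x (c - k) (RB s'.m Y (σ i)), s'.m⟩, ?_, ?_, ?_⟩
        · exact lift_ENS (fun i => rfl) hE
        · rw [hreplclk]
          refine estext ?_ rfl
          show T x (c - k) (RB s'.m Y (σ 0)) = T x (c - k) (replaceClocks Y s').st
          rw [repl_st, h0]
        · rw [hreplclk]
          intro hcon
          apply hD
          have h2 := proj_NS hcon
          have heq : (fun i => ((ETb x (c - k - 1)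
              (fun i => (⟨T x (c - k) (RB s'.m Y (σ i)), s'.m⟩ : RTEState α 𝒳))) i).st)
              = fun i => T x (c - (k + 1)) (RB s'.m Y (σ i)) := by
            funext i
            show T x (c - k - 1) (T x (c - k) (RB s'.m Y (σ i))) = _
            rw [T_T, Nat.sub_sub]
          rw [heq] at h2
          exact h2
      have h3 := inv_le_of_mem hInv hmem
      rw [hreplclk] at h3
      have h4 : (replaceClocks Y s').m x = s'.m x := rfl
      rw [h4] at h3
      omega

lemma replace_NS [Finite 𝒳] (hClk : ∀ s t, NextI s t → ∀ x, t.clk x = s.clk x)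
    (s' : RTEState α 𝒳) (hm : ∀ x, s'.m x ≤ s'.st.clk x)
    (hInv : ∀ Y : Set 𝒳, Inv NextI (replaceClocks Y s')) (Y : Set 𝒳) :
    ∀ σ ∈ NS NextI, σ 0 = s'.st → (fun i => RB s'.m Y (σ i)) ∈ NS NextI := by
  refine Set.Finite.induction_on
    (motive := fun Y _ => ∀ σ ∈ NS NextI, σ 0 = s'.st → (fun i => RB s'.m Y (σ i)) ∈ NS NextI)
    Y (Set.toFinite Y) ?_ ?_
  · intro σ hσ h0
    have he : (fun i => RB s'.m ∅ (σ i)) = σ := funext fun i => RB_empty _ _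
    rw [he]
    exact hσ
  · intro a Z ha _ IH σ hσ h0
    have hY := IH σ hσ h0
    have hL := lower_clock hClk s' ha (hInv Z) hσ h0 hY (s'.m a) le_rfl (hm a)
    have he : (fun i => RB s'.m (insert a Z) (σ i))
        = fun i => T a (s'.m a) (RB s'.m Z (σ i)) := funext fun i => RB_insert _ _ _ _
    rw [he]
    exact hL

lemma step_next [Finite 𝒳] (hClk : ∀ s t, NextI s t → ∀ x, t.clk x = s.clk x)
    {s' t' : RTEState α 𝒳} (h : ENextI NextI s' t')
    (hm : ∀ x, s'.m x ≤ s'.st.clk x)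
    (hInv : ∀ Y : Set 𝒳, Inv NextI (replaceClocks Y s')) :
    ∀ Y : Set 𝒳, Inv NextI (replaceClocks Y t') := by
  obtain ⟨hN, hmeq⟩ := h
  have hclkeq : ∀ x, t'.st.clk x = s'.st.clk x := hClk _ _ hN
  have hmfun : t'.m = s'.m := funext hmeq
  intro Y x
  by_cases hx : x ∈ Y
  · have h1 : (replaceClocks Y t').st.clk x = (replaceClocks Y t').m x := by
      show (if x ∈ Y then t'.m x else t'.st.clk x) = t'.m x
      rw [if_pos hx]
    rw [h1]
    exact self_le_add_right _ _
  · have htc : (replaceClocks Y t').st.clk x = s'.st.clk x := by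
      show (if x ∈ Y then t'.m x else t'.st.clk x) = s'.st.clk x
      rw [if_neg hx, hclkeq]
    have hsc : (replaceClocks Y s').st.clk x = s'.st.clk x := by
      show (if x ∈ Y then s'.m x else s'.st.clk x) = s'.st.clk x
      rw [if_neg hx]
    show ((replaceClocks Y t').st.clk x : ℕ∞) ≤ ((replaceClocks Y t').m x : ℕ∞) + _
    unfold RT.nfun
    apply le_add_sInf
    intro n hn
    by_contra hcon
    push_neg at hcon
    have hmx : (replaceClocks Y t').m x = s'.m x := hmeq x
    rw [htc] at hn
    rw [htc, hmx] at hcon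
    obtain ⟨τw, hτw, h0w, hbw⟩ := hn
    set c := s'.st.clk x with hcdef
    set d := c - n with hd
    have hdm : s'.m x < d := by omega
    have hdc : d ≤ c := by omega
    -- the two-state behavior
    set σstep : ℕ → RTState α 𝒳 := fun i => if i = 0 then s'.st else t'.st with hσstep
    have hstep : σstep ∈ NS NextI := by
      intro i
      cases i with
      | zero => exact Or.inl hN
      | succ j => exact Or.inr rfl
    have h00 : σstep 0 = s'.st := rfl
    have hrep := replace_NS hClk s' hm hInv Y σstep hstep h00
    have hlow := lower_clock hClk s' hx (hInv Y) hstep h00 hrep d (by omega) hdc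
    have hstep0 := hlow 0
    -- the prepended witness behavior
    set τ : ℕ → RTEState α 𝒳 :=
      fun i => Nat.casesOn i (ET x d (replaceClocks Y s')) (fun j => τw j) with hτdef
    have hτ0st : (τ 0).st = T x d (RB s'.m Y s'.st) := rfl
    have hτ1 : τ 1 = τw 0 := rfl
    have hτ1st : (τ 1).st = T x d (RB s'.m Y t'.st) := by
      rw [hτ1, h0w]
      show T x d (replaceClocks Y t').st = _
      rw [repl_st, hmfun]
    have hτENS : τ ∈ ENS NextI := by
      intro j
      cases j with
      | zero =>
        rcases hstep0 with h' | h'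
        · refine Or.inl ⟨?_, ?_⟩
          · show NextI (τ 0).st (τ 1).st
            rw [hτ1st, hτ0st]
            exact h'
          · intro y
            show (τw 0).m y = s'.m y
            rw [h0w]
            exact hmeq y
        · refine Or.inr (estext ?_ ?_)
          · show (τ 1).st = (τ 0).st
            rw [hτ1st, hτ0st]
            exact h'
          · show (τw 0).m = s'.m
            rw [h0w]
            exact hmfun
      | succ i => exact hτw i
    have hmem : n ∈ {n : ℕ | ∃ τ ∈ ENS NextI,
        τ 0 = ET x ((replaceClocks Y s').st.clk x - n) (replaceClocks Y s') ∧
        ETb x ((replaceClocks Y s').st.clk x - n - 1) τ ∉ ENS NextI} := by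
      refine ⟨τ, hτENS, ?_, ?_⟩
      · rw [hsc]
        rfl
      · rw [hsc]
        intro hcon2
        apply hbw
        have hsh := shift_ENS hcon2
        have heq : (fun j => (ETb x (c - n - 1) τ) (j + 1))
            = ETb x (c - n - 1) τw := by
          funext j
          rfl
        rw [heq] at hsh
        exact hsh
    have h3 := inv_le_of_mem (hInv Y) hmem
    rw [hsc] at h3
    have h4 : (replaceClocks Y s').m x = s'.m x := rfl
    rw [h4] at h3
    omega

variable {B relETP : 𝒳 → RTState α 𝒳 → Set ℕ}

lemma step_adv
    (hA2 : ∀ (x : 𝒳) (s : RTState α 𝒳), RT.ETP NextI x s ⊆ relETP x s ∧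
      { n | ∃ b ∈ B x s, n = b + 1 } ⊆ relETP x s)
    (hA3 : ∀ (x : 𝒳) (s t : RTState α 𝒳), s.core = t.core →
      B x s = B x t ∧ relETP x s = relETP x t)
    {s' t' : RTEState α 𝒳} (h : EAdvanceTime B relETP s' t')
    (hm : ∀ x, s'.m x ≤ s'.st.clk x) :
    (∀ x, t'.m x ≤ t'.st.clk x) ∧
    (∀ x n, n ∈ relETP x t'.st → n ≤ t'.st.clk x → n ≤ t'.m x) ∧
    (∀ Y : Set 𝒳, Inv NextI (replaceClocks Y t')) := by
  obtain ⟨⟨hcore, hclk, hB⟩, hsup⟩ := h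
  have hSbdd : ∀ x : 𝒳, ∀ e ∈ ({s'.m x} ∪ { n ∈ relETP x s'.st | n ≤ t'.st.clk x } : Set ℕ),
      e ≤ t'.st.clk x := by
    intro x e he
    rcases he with he | he
    · rw [Set.mem_singleton_iff] at he
      subst he
      rw [hclk x]
      exact (hm x).trans (Nat.le_succ _)
    · exact he.2
  have hbddAbove : ∀ x : 𝒳,
      BddAbove ({s'.m x} ∪ { n ∈ relETP x s'.st | n ≤ t'.st.clk x } : Set ℕ) :=
    fun x => ⟨t'.st.clk x, fun e he => hSbdd x e he⟩
  have hmm : ∀ x, t'.m x ≤ t'.st.clk x := by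
    intro x
    rw [hsup x]
    exact csSup_le ⟨s'.m x, Or.inl rfl⟩ (hSbdd x)
  have hmem_le : ∀ x : 𝒳, ∀ n, n ∈ relETP x s'.st → n ≤ t'.st.clk x → n ≤ t'.m x := by
    intro x n h1 h2
    rw [hsup x]
    exact le_csSup (hbddAbove x) (Or.inr ⟨h1, h2⟩)
  have hrelEq : ∀ x, relETP x t'.st = relETP x s'.st := fun x => (hA3 x t'.st s'.st hcore).2
  refine ⟨hmm, ?_, ?_⟩
  · intro x n h1 h2
    exact hmem_le x n (by rwa [hrelEq x] at h1) h2
  · intro Y x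
    by_cases hx : x ∈ Y
    · have h1 : (replaceClocks Y t').st.clk x = (replaceClocks Y t').m x := by
        show (if x ∈ Y then t'.m x else t'.st.clk x) = t'.m x
        rw [if_pos hx]
      rw [h1]
      exact self_le_add_right _ _
    · have htc : (replaceClocks Y t').st.clk x = t'.st.clk x := by
        show (if x ∈ Y then t'.m x else t'.st.clk x) = t'.st.clk x
        rw [if_neg hx]
      show ((replaceClocks Y t').st.clk x : ℕ∞) ≤ ((replaceClocks Y t').m x : ℕ∞) + _
      unfold RT.nfun
      apply le_add_sInf
      intro n hn
      by_contra hcon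
      push_neg at hcon
      have hmx : (replaceClocks Y t').m x = t'.m x := rfl
      rw [htc] at hn
      rw [htc, hmx] at hcon
      obtain ⟨τw, hτw, h0w, hbw⟩ := hn
      set c := t'.st.clk x with hcdef
      set d := c - n with hd
      have hdm : t'.m x < d := by omega
      have hd1 : 1 ≤ d := by omega
      set υ : ℕ → RTState α 𝒳 := fun i => (τw i).st with hυdef
      have hυ : υ ∈ NS NextI := proj_NS hτw
      have hυ0 : υ 0 = T x d (replaceClocks Y t').st := by rw [hυdef]; simp only []; rw [h0w]; rfl
      have hυ0clk : (υ 0).clk x = d := by rw [hυ0]; simp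
      have hbreak : Tb x (d - 1) υ ∉ NS NextI := by
        intro hcc
        apply hbw
        refine lift_ENS ?_ ?_
        · intro i
          exact m_const hτw i
        · exact hcc
      have hETP : d ∈ ETP NextI x (υ 0) :=
        ⟨hd1, υ, hυ, (T_self hυ0clk).symm, hbreak⟩
      have hrel : d ∈ relETP x (υ 0) := (hA2 x (υ 0)).1 hETP
      have hcoreυ : (υ 0).core = s'.st.core := by
        rw [hυ0]
        show (replaceClocks Y t').st.core = s'.st.core
        exact hcore
      have hrel' : d ∈ relETP x s'.st := by
        rw [← (hA3 x (υ 0) s'.st hcoreυ).2]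
        exact hrel
      have hled : d ≤ t'.m x := hmem_le x d hrel' (by omega)
      omega

end RTAux

theorem extended_implements_barred_optimized {α : Type u} {𝒳 : Type v} [Finite 𝒳]
    (Init : Set (RTState α 𝒳)) (NextI : RTState α 𝒳 → RTState α 𝒳 → Prop)
    (B relETP : 𝒳 → RTState α 𝒳 → Set ℕ)
    (hClk : ∀ s t, NextI s t → ∀ x, t.clk x = s.clk x)
    (hA1 : ∀ (x : 𝒳) (d : ℕ) (s : RTState α 𝒳), B x (RT.T x d s) = B x s)
    (hA2 : ∀ (x : 𝒳) (s : RTState α 𝒳), RT.ETP NextI x s ⊆ relETP x s ∧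
      { n | ∃ b ∈ B x s, n = b + 1 } ⊆ relETP x s)
    (hA3 : ∀ (x : 𝒳) (s t : RTState α 𝒳), s.core = t.core →
      B x s = B x t ∧ relETP x s = relETP x t)
    (hA4 : ∀ s t, NextI s t → ∀ (x : 𝒳), ∀ n ∈ relETP x t, n ≤ t.clk x → n ∈ relETP x s)
    (σ' : ℕ → RTEState α 𝒳) (hI : σ' 0 ∈ RT.EInit Init)
    (hσ : ∀ i, RT.ENextI NextI (σ' i) (σ' (i + 1)) ∨
      RT.EAdvanceTime B relETP (σ' i) (σ' (i + 1)) ∨ σ' (i + 1) = σ' i) :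
    RT.bar (σ' 0) ∈ Init ∧
      ∀ i, NextI (RT.bar (σ' i)) (RT.bar (σ' (i + 1))) ∨
        RT.AdvanceTimeHat B relETP (RT.bar (σ' i)) (RT.bar (σ' (i + 1))) ∨
        RT.bar (σ' (i + 1)) = RT.bar (σ' i) := by
  obtain ⟨hI0, hIm⟩ := hI
  -- the inductive invariant
  have key : ∀ i, (∀ x, (σ' i).m x ≤ (σ' i).st.clk x) ∧
      (∀ x n, n ∈ relETP x (σ' i).st → n ≤ (σ' i).st.clk x → n ≤ (σ' i).m x) ∧
      (∀ Y : Set 𝒳, RT.Inv NextI (RT.replaceClocks Y (σ' i))) := by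
    intro i
    induction i with
    | zero =>
      refine ⟨fun x => (hIm x).le, fun x n _ h => by rw [hIm x]; exact h, ?_⟩
      intro Y x
      have hcl : (RT.replaceClocks Y (σ' 0)).st.clk x = (σ' 0).m x := by
        show (if x ∈ Y then (σ' 0).m x else (σ' 0).st.clk x) = (σ' 0).m x
        by_cases hx : x ∈ Y
        · rw [if_pos hx]
        · rw [if_neg hx, hIm x]
      rw [hcl]
      exact self_le_add_right _ _
    | succ j ih =>
      obtain ⟨ihm, ih3, ihInv⟩ := ih
      rcases hσ j with h | h | h
      · refine ⟨?_, ?_, RTAux.step_next hClk h ihm ihInv⟩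
        · intro x
          rw [h.2 x, hClk _ _ h.1 x]
          exact ihm x
        · intro x n hrel hle
          rw [h.2 x]
          refine ih3 x n (hA4 _ _ h.1 x n hrel hle) ?_
          rw [← hClk _ _ h.1 x]
          exact hle
      · exact RTAux.step_adv hA2 hA3 h ihm
      · rw [h]
        exact ⟨ihm, ih3, ihInv⟩
  constructor
  · have hb : RT.bar (σ' 0) = (σ' 0).st := RTAux.stext rfl (funext fun x => hIm x)
    rw [hb]
    exact hI0
  · intro i
    obtain ⟨hm, h3, hInvA⟩ := key i
    rcases hσ i with h | h | h
    · -- NextI' step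
      obtain ⟨hN, hmeq⟩ := h
      set σstep : ℕ → RTState α 𝒳 := fun k => if k = 0 then (σ' i).st else (σ' (i+1)).st
        with hσstep
      have hstep : σstep ∈ RT.NS NextI := by
        intro k
        cases k with
        | zero => exact Or.inl hN
        | succ j => exact Or.inr rfl
      have hrep := RTAux.replace_NS hClk (σ' i) hm hInvA Set.univ σstep hstep rfl
      have hstep0 := hrep 0
      have e0 : RTAux.RB (σ' i).m Set.univ (σstep 0) = RT.bar (σ' i) := by
        show RTAux.RB (σ' i).m Set.univ (σ' i).st = RT.bar (σ' i)
        rw [RTAux.RB_univ]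
        rfl
      have e1 : RTAux.RB (σ' i).m Set.univ (σstep 1) = RT.bar (σ' (i+1)) := by
        show RTAux.RB (σ' i).m Set.univ (σ' (i+1)).st = RT.bar (σ' (i+1))
        rw [RTAux.RB_univ]
        exact RTAux.stext rfl (funext fun x => (hmeq x).symm)
      rcases hstep0 with h' | h'
      · left
        have h'' : NextI (RTAux.RB (σ' i).m Set.univ (σstep 0))
            (RTAux.RB (σ' i).m Set.univ (σstep 1)) := h'
        rwa [e0, e1] at h''
      · right; right
        have h'' : RTAux.RB (σ' i).m Set.univ (σstep 1)
            = RTAux.RB (σ' i).m Set.univ (σstep 0) := h'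
        rwa [e0, e1] at h''
    · -- AdvanceTime' step
      obtain ⟨⟨hcore, hclk, hB⟩, hsup⟩ := h
      set s' := σ' i
      set t' := σ' (i + 1)
      have hSbdd : ∀ x : 𝒳, ∀ e ∈ ({s'.m x} ∪ { n ∈ relETP x s'.st | n ≤ t'.st.clk x } : Set ℕ),
          e ≤ t'.st.clk x := by
        intro x e he
        rcases he with he | he
        · rw [Set.mem_singleton_iff] at he
          subst he
          rw [hclk x]
          exact (hm x).trans (Nat.le_succ _)
        · exact he.2
      have hbdd : ∀ x : 𝒳,
          BddAbove ({s'.m x} ∪ { n ∈ relETP x s'.st | n ≤ t'.st.clk x } : Set ℕ) :=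
        fun x => ⟨t'.st.clk x, fun e he => hSbdd x e he⟩
      have hne : ∀ x : 𝒳,
          ({s'.m x} ∪ { n ∈ relETP x s'.st | n ≤ t'.st.clk x } : Set ℕ).Nonempty :=
        fun x => ⟨s'.m x, Or.inl rfl⟩
      have hmono : ∀ x, s'.m x ≤ t'.m x := by
        intro x
        rw [hsup x]
        exact le_csSup (hbdd x) (Or.inl rfl)
      have hrelbar : ∀ x, relETP x (RT.bar s') = relETP x s'.st :=
        fun x => (hA3 x (RT.bar s') s'.st rfl).2
      have hBbar : ∀ x, B x (RT.bar s') = B x s'.st :=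
        fun x => (hA3 x (RT.bar s') s'.st rfl).1
      by_cases hall : ∀ x, t'.m x = s'.m x
      · right; right
        exact RTAux.stext hcore (funext hall)
      · right; left
        push_neg at hall
        refine ⟨hcore, ?_, ?_, ?_⟩
        · obtain ⟨x, hx⟩ := hall
          exact ⟨x, lt_of_le_of_ne (hmono x) (Ne.symm hx)⟩
        · intro x
          by_cases hx : t'.m x = s'.m x
          · exact Or.inl hx
          · refine Or.inr ⟨lt_of_le_of_ne (hmono x) (Ne.symm hx), ?_⟩
            have hmem : t'.m x ∈ ({s'.m x} ∪ { n ∈ relETP x s'.st | n ≤ t'.st.clk x } : Set ℕ) := by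
              rw [hsup x]
              exact Nat.sSup_mem (hne x) (hbdd x)
            rcases hmem with hmem | hmem
            · rw [Set.mem_singleton_iff] at hmem
              exact absurd hmem hx
            · show t'.m x ∈ relETP x (RT.bar s')
              rw [hrelbar x]
              exact hmem.1
        · intro x b hb hmb
          have hmb' : s'.m x ≤ b := hmb
          show t'.m x ≤ b
          rw [hBbar x] at hb
          rw [hsup x]
          refine csSup_le (hne x) ?_
          intro e he
          rcases he with he | he
          · rw [Set.mem_singleton_iff] at he
            subst he
            exact hmb'
          · obtain ⟨he1, he2⟩ := he
            have hbneq : s'.st.clk x ≠ b := fun hc => hB x (hc ▸ hb)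
            by_cases hec : e ≤ s'.st.clk x
            · exact (h3 x e he1 hec).trans hmb
            · -- e = s'.st.clk x + 1
              have hee : e = s'.st.clk x + 1 := by
                rw [hclk x] at he2
                omega
              -- show b > s'.st.clk x
              rcases lt_or_gt_of_ne hbneq with hlt | hgt
              · omega
              · -- b < s'.st.clk x : contradiction via b+1 ∈ relETP and Inv3
                exfalso
                have hb1 : b + 1 ∈ relETP x s'.st := (hA2 x s'.st).2 ⟨b, hb, rfl⟩
                have := h3 x (b + 1) hb1 (by omega)
                omega
    · right; right
      rw [h]
end

section
/- Monotonicity of n^x along internal steps: if (s', t') is a NextI' step, then for every clock x one has n^x(s') ≤ n^x(t') as elements of ℕ ∪ {∞}. -/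
open scoped Classical

universe u v

namespace RT

variable {α : Type u} {𝒳 : Type v}

lemma T_self (x : 𝒳) (s : RTState α 𝒳) : T x (s.clk x) s = s := by
  cases s with
  | mk core clk =>
    simp only [T, RTState.mk.injEq, true_and]
    funext y
    by_cases hy : y = x <;> simp [hy]

lemma T_T (x : 𝒳) (a b : ℕ) (s : RTState α 𝒳) : T x a (T x b s) = T x a s := by
  simp only [T, RTState.mk.injEq, true_and]
  funext y
  by_cases hy : y = x <;> simp [hy]

lemma ET_ET (x : 𝒳) (a b : ℕ) (s' : RTEState α 𝒳) :
    ET x a (ET x b s') = ET x a s' := by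
  simp [ET, T_T]

lemma ET_self (x : 𝒳) (s' : RTEState α 𝒳) : ET x (s'.st.clk x) s' = s' := by
  cases s' with
  | mk st m => simp [ET, T_self]

/-- Prepending an initial `ENextI` (or stuttering) step to a witness behavior. -/
lemma prepend_witness (NextI : RTState α 𝒳 → RTState α 𝒳 → Prop)
    (x : 𝒳) (s' t' : RTEState α 𝒳) (d : ℕ)
    (hstep : ENextI NextI (ET x d s') (ET x d t') ∨ ET x d t' = ET x d s')
    (σ : ℕ → RTEState α 𝒳) (hσ : σ ∈ ENS NextI) (hσ0 : σ 0 = ET x d t')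
    (hbad : ETb x (d - 1) σ ∉ ENS NextI) :
    ∃ ρ ∈ ENS NextI, ρ 0 = ET x d s' ∧ ETb x (d - 1) ρ ∉ ENS NextI := by
  refine ⟨fun i => if i = 0 then ET x d s' else σ (i - 1), ?_, by simp, ?_⟩
  · intro i
    cases i with
    | zero => simpa [hσ0] using hstep
    | succ j =>
      simpa using hσ j
  · intro hcon
    apply hbad
    intro i
    have := hcon (i + 1)
    simpa [ETb] using this

/-- A direct two-state witness behavior. -/
lemma two_state_witness (NextI : RTState α 𝒳 → RTState α 𝒳 → Prop)
    (x : 𝒳) (s' t' : RTEState α 𝒳) (hm : ∀ y, t'.m y = s'.m y) (k : ℕ)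
    (hQk : NextI (T x k s'.st) (T x k t'.st) ∨ T x k t'.st = T x k s'.st)
    (hk1 : ¬ NextI (T x (k - 1) s'.st) (T x (k - 1) t'.st))
    (hk2 : T x (k - 1) t'.st ≠ T x (k - 1) s'.st) :
    ∃ ρ ∈ ENS NextI, ρ 0 = ET x k s' ∧ ETb x (k - 1) ρ ∉ ENS NextI := by
  classical
  refine ⟨fun i => if i = 0 then ET x k s' else ET x k t', ?_, by simp, ?_⟩
  · intro i
    cases i with
    | zero =>
      simp only [if_pos rfl, if_neg (Nat.succ_ne_zero 0)]
      rcases hQk with hQk | hQk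
      · exact Or.inl ⟨hQk, fun y => hm y⟩
      · exact Or.inr (by simp [ET, hQk, funext hm])
    | succ j => exact Or.inr (by simp)
  · intro hcon
    have h0 := hcon 0
    have e0 : ETb x (k - 1) (fun i => if i = 0 then ET x k s' else ET x k t') 0
        = ET x (k - 1) s' := by
      show ET x (k - 1) (ET x k s') = ET x (k - 1) s'
      exact ET_ET x (k - 1) k s'
    have e1 : ETb x (k - 1) (fun i => if i = 0 then ET x k s' else ET x k t') 1
        = ET x (k - 1) t' := by
      show ET x (k - 1) (ET x k t') = ET x (k - 1) t'
      exact ET_ET x (k - 1) k t'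
    rw [show (0 + 1) = 1 from rfl] at h0
    rw [e0, e1] at h0
    rcases h0 with ⟨hNbad, _⟩ | heq
    · exact hk1 hNbad
    · exact hk2 (congrArg RTEState.st heq)

end RT

theorem nfun_mono_of_internal_step {α : Type u} {𝒳 : Type v}
    (NextI : RTState α 𝒳 → RTState α 𝒳 → Prop)
    (hClk : ∀ s t, NextI s t → ∀ x, t.clk x = s.clk x)
    (s' t' : RTEState α 𝒳) (h : RT.ENextI NextI s' t') :
    ∀ x, RT.nfun NextI x s' ≤ RT.nfun NextI x t' := by
  intro x
  obtain ⟨hN, hm⟩ := h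
  have hc : t'.st.clk x = s'.st.clk x := hClk _ _ hN x
  set c := s'.st.clk x with hcdef
  unfold RT.nfun
  apply le_sInf
  rintro b ⟨n, hn, rfl⟩
  obtain ⟨σ, hσ, hσ0, hbad⟩ := hn
  rw [hc] at hσ0 hbad
  -- the key predicate
  set Q : ℕ → Prop := fun k =>
    NextI (RT.T x k s'.st) (RT.T x k t'.st) ∨ RT.T x k t'.st = RT.T x k s'.st with hQdef
  have hQc : Q c := by
    have h1 : RT.T x c s'.st = s'.st := RT.T_self x s'.st
    have h2 : RT.T x c t'.st = t'.st := by rw [← hc]; exact RT.T_self x t'.st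
    exact Or.inl (by rw [h1, h2]; exact hN)
  -- it suffices to exhibit m ≤ n in the witness set of s'
  have key : ∃ m ≤ n, ∃ ρ ∈ RT.ENS NextI, ρ 0 = RT.ET x (c - m) s' ∧
      RT.ETb x (c - m - 1) ρ ∉ RT.ENS NextI := by
    by_cases hQ : Q (c - n)
    · refine ⟨n, le_rfl, ?_⟩
      have hstep : RT.ENextI NextI (RT.ET x (c - n) s') (RT.ET x (c - n) t') ∨
          RT.ET x (c - n) t' = RT.ET x (c - n) s' := by
        rcases hQ with hQ | hQ
        · exact Or.inl ⟨hQ, fun y => hm y⟩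
        · exact Or.inr (by simp [RT.ET, hQ, funext hm])
      exact RT.prepend_witness NextI x s' t' (c - n) hstep σ hσ hσ0 hbad
    · -- find the least k > c - n with Q k
      have hdc : c - n < c := by
        rcases lt_or_eq_of_le (Nat.sub_le c n) with h1 | h1
        · exact h1
        · exact absurd (by rw [h1]; exact hQc) hQ
      have hex : ∃ j, Q (c - n + 1 + j) := by
        refine ⟨c - (c - n + 1), ?_⟩
        have he : c - n + 1 + (c - (c - n + 1)) = c := by omega
        rw [he]; exact hQc
      classical
      set k := c - n + 1 + Nat.find hex with hkdef
      have hQk : Q k := Nat.find_spec hex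
      have hkc : k ≤ c := by
        have h3 : Q (c - n + 1 + (c - (c - n + 1))) := by
          have he : c - n + 1 + (c - (c - n + 1)) = c := by omega
          rw [he]; exact hQc
        have := Nat.find_min' hex h3
        omega
      have hQk1 : ¬ Q (k - 1) := by
        rcases Nat.eq_zero_or_pos (Nat.find hex) with h0 | h0
        · have he : k - 1 = c - n := by omega
          rwa [he]
        · have hlt : Nat.find hex - 1 < Nat.find hex := by omega
          have hmin := Nat.find_min hex hlt
          have he : k - 1 = c - n + 1 + (Nat.find hex - 1) := by omega
          rwa [he]
      have hQk1' : ¬ NextI (RT.T x (k - 1) s'.st) (RT.T x (k - 1) t'.st) ∧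
          RT.T x (k - 1) t'.st ≠ RT.T x (k - 1) s'.st := by
        simp only [hQdef] at hQk1
        push_neg at hQk1
        exact hQk1
      refine ⟨c - k, by omega, ?_⟩
      have h1 : c - (c - k) = k := by omega
      rw [h1]
      exact RT.two_state_witness NextI x s' t' hm k hQk hQk1'.1 hQk1'.2
  obtain ⟨m, hmn, ρ, hρ, hρ0, hρbad⟩ := key
  calc sInf ((fun n : ℕ => (n : ℕ∞)) ''
      { n : ℕ | ∃ σ ∈ RT.ENS NextI, σ 0 = RT.ET x (s'.st.clk x - n) s' ∧
          RT.ETb x (s'.st.clk x - n - 1) σ ∉ RT.ENS NextI }) ≤ (m : ℕ∞) :=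
        sInf_le ⟨m, ⟨ρ, hρ, hρ0, hρbad⟩, rfl⟩
    _ ≤ (n : ℕ∞) := by exact_mod_cast hmn
end

section
/- Correspondence of newly possible behaviors between the base and extended systems: for every extended state s', every clock x, and every d ∈ ℕ with d ≥ 1, there exists a behavior σ ∈ N_S with σ 0 = T^x_d(st s') and 𝒯^x_{d−1}(σ) ∉ N_S if and only if there exists a behavior σ' ∈ N_{S'} with σ' 0 = T'^x_d(s') and 𝒯'^x_{d−1}(σ') ∉ N_{S'}. -/
open scoped Classical

universe u v

theorem newly_possible_behaviors_correspondence {α : Type u} {𝒳 : Type v}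
    (NextI : RTState α 𝒳 → RTState α 𝒳 → Prop)
    (hClk : ∀ s t, NextI s t → ∀ x, t.clk x = s.clk x)
    (s' : RTEState α 𝒳) (x : 𝒳) (d : ℕ) (hd : 1 ≤ d) :
    (∃ σ ∈ RT.NS NextI, σ 0 = RT.T x d s'.st ∧ RT.Tb x (d - 1) σ ∉ RT.NS NextI) ↔
      (∃ σ' ∈ RT.ENS NextI, σ' 0 = RT.ET x d s' ∧
        RT.ETb x (d - 1) σ' ∉ RT.ENS NextI) := by
  constructor
  · rintro ⟨σ, hσ, h0, hnot⟩
    refine ⟨fun i => ⟨σ i, s'.m⟩, ?_, ?_, ?_⟩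
    · intro i
      rcases hσ i with h | h
      · exact Or.inl ⟨h, fun _ => rfl⟩
      · exact Or.inr (by simp [h])
    · simp [RT.ET, h0]
    · intro hmem
      apply hnot
      intro i
      rcases hmem i with ⟨h, _⟩ | h
      · exact Or.inl h
      · right
        have := congrArg RTEState.st h
        simpa [RT.ETb, RT.ET, RT.Tb] using this
  · rintro ⟨σ', hσ', h0, hnot⟩
    have hm : ∀ i, (σ' (i + 1)).m = (σ' i).m := by
      intro i
      rcases hσ' i with ⟨_, h⟩ | h
      · exact funext h
      · rw [h]
    refine ⟨fun i => (σ' i).st, ?_, ?_, ?_⟩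
    · intro i
      rcases hσ' i with ⟨h, _⟩ | h
      · exact Or.inl h
      · exact Or.inr (congrArg RTEState.st h)
    · exact congrArg RTEState.st h0
    · intro hmem
      apply hnot
      intro i
      rcases hmem i with h | h
      · exact Or.inl ⟨h, fun y => congrFun (hm i) y⟩
      · right
        have h' : RT.T x (d - 1) (σ' (i + 1)).st = RT.T x (d - 1) (σ' i).st := h
        show RT.ET x (d - 1) (σ' (i + 1)) = RT.ET x (d - 1) (σ' i)
        simp [RT.ET, h', hm i]
end

section
/- Preservation of time bounds under the mapped clocks: suppose Assumption 2 holds. Let (s', t') be an AdvanceTime' step, x a clock, and b ∈ B^x(st s'). If b ≥ s'.m^x and every n ∈ relETP^x(st s') with n ≤ s'.x satisfies n ≤ s'.m^x, then t'.m^x ≤ b. -/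
open scoped Classical

universe u v

theorem time_bounds_preserved_under_mapped_clocks {α : Type u} {𝒳 : Type v}
    (NextI : RTState α 𝒳 → RTState α 𝒳 → Prop)
    (B relETP : 𝒳 → RTState α 𝒳 → Set ℕ)
    (hClk : ∀ s t, NextI s t → ∀ x, t.clk x = s.clk x)
    (hA2 : ∀ (x : 𝒳) (s : RTState α 𝒳), RT.ETP NextI x s ⊆ relETP x s ∧
      { n | ∃ b ∈ B x s, n = b + 1 } ⊆ relETP x s)
    (s' t' : RTEState α 𝒳) (h : RT.EAdvanceTime B relETP s' t')
    (x : 𝒳) (b : ℕ) (hb : b ∈ B x s'.st) (hbm : s'.m x ≤ b)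
    (hrel : ∀ n ∈ relETP x s'.st, n ≤ s'.st.clk x → n ≤ s'.m x) :
    t'.m x ≤ b := by
  obtain ⟨⟨hcore, hclk, hnb⟩, hm⟩ := h
  rw [hm x]
  apply csSup_le ⟨s'.m x, Or.inl rfl⟩
  intro n hn
  rcases hn with hn | ⟨hnrel, hnle⟩
  · exact le_trans (le_of_eq hn) hbm
  · rw [hclk x] at hnle
    rcases Nat.lt_or_ge n (s'.st.clk x + 1) with hlt | hge
    · exact le_trans (hrel n hnrel (Nat.lt_succ_iff.mp hlt)) hbm
    · -- n = s'.st.clk x + 1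
      have hn1 : n = s'.st.clk x + 1 := le_antisymm hnle hge
      -- show b ≥ s'.st.clk x + 1
      by_contra hnb'
      push_neg at hnb'
      have hne : b ≠ s'.st.clk x := fun he => hnb x (he ▸ hb)
      have hble : b + 1 ≤ s'.st.clk x := by omega
      have hb1 : b + 1 ∈ relETP x s'.st := (hA2 x s'.st).2 ⟨b, hb, rfl⟩
      have := hrel (b + 1) hb1 hble
      omega
end

section
/- Time-advance steps are preserved by the bar projection: suppose Assumptions 2 and 3 hold. Let (s', t') be an AdvanceTime' step, and assume that for every clock x, every n ∈ relETP^x(st s') with n ≤ s'.x satisfies n ≤ s'.m^x. Then either bar(t') = bar(s'), or (bar(s'), bar(t')) is an AdvanceTime_Ŝ step. -/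
open scoped Classical

universe u v

theorem advance_steps_preserved_by_bar {α : Type u} {𝒳 : Type v}
    (NextI : RTState α 𝒳 → RTState α 𝒳 → Prop)
    (B relETP : 𝒳 → RTState α 𝒳 → Set ℕ)
    (hClk : ∀ s t, NextI s t → ∀ x, t.clk x = s.clk x)
    (hA2 : ∀ (x : 𝒳) (s : RTState α 𝒳), RT.ETP NextI x s ⊆ relETP x s ∧
      { n | ∃ b ∈ B x s, n = b + 1 } ⊆ relETP x s)
    (hA3 : ∀ (x : 𝒳) (s t : RTState α 𝒳), s.core = t.core →
      B x s = B x t ∧ relETP x s = relETP x t)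
    (s' t' : RTEState α 𝒳) (h : RT.EAdvanceTime B relETP s' t')
    (hrel : ∀ (x : 𝒳), ∀ n ∈ relETP x s'.st, n ≤ s'.st.clk x → n ≤ s'.m x) :
    RT.bar t' = RT.bar s' ∨ RT.AdvanceTimeHat B relETP (RT.bar s') (RT.bar t') := by
  obtain ⟨⟨hcore, hclk, hB⟩, hm⟩ := h
  have hbdd : ∀ x, BddAbove ({s'.m x} ∪ { n ∈ relETP x s'.st | n ≤ t'.st.clk x }) := by
    intro x
    refine ⟨max (s'.m x) (t'.st.clk x), ?_⟩
    rintro n (rfl | ⟨_, hn⟩)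
    · exact le_max_left _ _
    · exact le_trans hn (le_max_right _ _)
  have hmem : ∀ x, t'.m x ∈ ({s'.m x} ∪ { n ∈ relETP x s'.st | n ≤ t'.st.clk x }) := by
    intro x; rw [hm x]
    exact Nat.sSup_mem ⟨s'.m x, Or.inl rfl⟩ (hbdd x)
  have hge : ∀ x, s'.m x ≤ t'.m x := by
    intro x; rw [hm x]; exact le_csSup (hbdd x) (Or.inl rfl)
  have key : ∀ x, t'.m x = s'.m x ∨
      (s'.m x < t'.m x ∧ t'.m x ∈ relETP x s'.st ∧ t'.m x = s'.st.clk x + 1) := by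
    intro x
    rcases hmem x with h1 | ⟨h1, h2⟩
    · exact Or.inl h1
    · rcases eq_or_lt_of_le (hge x) with heq | hlt
      · exact Or.inl heq.symm
      · refine Or.inr ⟨hlt, h1, ?_⟩
        have h3 : ¬ t'.m x ≤ s'.st.clk x := fun hle =>
          absurd (hrel x _ h1 hle) (not_le.mpr hlt)
        have h2' : t'.m x ≤ s'.st.clk x + 1 := by rw [hclk x] at h2; exact h2
        omega
  have hcoreeq : (RT.bar s').core = s'.st.core := rfl
  by_cases hall : ∀ x, t'.m x = s'.m x
  · left
    show (⟨t'.st.core, t'.m⟩ : RTState α 𝒳) = ⟨s'.st.core, s'.m⟩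
    rw [hcore, funext hall]
  · right
    push_neg at hall
    obtain ⟨x0, hx0⟩ := hall
    have hBeq : ∀ x, B x (RT.bar s') = B x s'.st := fun x => (hA3 x (RT.bar s') s'.st rfl).1
    have hReq : ∀ x, relETP x (RT.bar s') = relETP x s'.st :=
      fun x => (hA3 x (RT.bar s') s'.st rfl).2
    refine ⟨hcore, ⟨x0, ?_⟩, ?_, ?_⟩
    · rcases key x0 with h1 | ⟨h1, _⟩
      · exact absurd h1 hx0
      · exact h1
    · intro x
      rcases key x with h1 | ⟨h1, h2, _⟩
      · exact Or.inl h1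
      · exact Or.inr ⟨h1, (hReq x).symm ▸ h2⟩
    · intro x b hb hmb
      rw [hBeq x] at hb
      replace hmb : s'.m x ≤ b := hmb
      show t'.m x ≤ b
      rcases key x with h1 | ⟨h1, h2, h3⟩
      · exact h1 ▸ hmb
      · by_contra hgt
        push_neg at hgt
        have hne : b ≠ s'.st.clk x := fun he => hB x (he ▸ hb)
        have hbp : b + 1 ∈ relETP x s'.st := (hA2 x s'.st).2 ⟨b, hb, rfl⟩
        have : b + 1 ≤ s'.st.clk x := by omega
        have := hrel x (b + 1) hbp this
        omega
end

section
/- Downward translation after an internal step: let (s', t') be a NextI' step, x a clock, and n ∈ ℕ with n < s'.x and (n : ℕ ∪ {∞}) < n^x(s'). Then every behavior σ ∈ N_{S'} with σ 0 = T'^x_{s'.x − n}(t') satisfies 𝒯'^x_{s'.x − n − 1}(σ) ∈ N_{S'}. -/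
open scoped Classical

universe u v

theorem downward_translation_after_internal_step {α : Type u} {𝒳 : Type v}
    (NextI : RTState α 𝒳 → RTState α 𝒳 → Prop)
    (hClk : ∀ s t, NextI s t → ∀ x, t.clk x = s.clk x)
    (s' t' : RTEState α 𝒳) (h : RT.ENextI NextI s' t')
    (x : 𝒳) (n : ℕ) (h1 : n < s'.st.clk x) (h2 : (n : ℕ∞) < RT.nfun NextI x s') :
    ∀ σ ∈ RT.ENS NextI, σ 0 = RT.ET x (s'.st.clk x - n) t' →
      RT.ETb x (s'.st.clk x - n - 1) σ ∈ RT.ENS NextI := by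
  classical
  intro σ hσ hσ0
  obtain ⟨hN, hm⟩ := h
  set c := s'.st.clk x with hc
  have hclk : t'.st.clk x = c := hClk _ _ hN x
  -- composition of T at the same clock
  have Tcomp : ∀ (d e : ℕ) (u : RTState α 𝒳), RT.T x d (RT.T x e u) = RT.T x d u := by
    intro d e u
    unfold RT.T
    congr 1
    funext y
    by_cases hy : y = x <;> simp [hy]
  have ETcomp : ∀ (d e : ℕ) (u : RTEState α 𝒳),
      RT.ET x d (RT.ET x e u) = RT.ET x d u := by
    intro d e u
    unfold RT.ET
    rw [Tcomp]
  -- T with the current clock value is the identity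
  have Teq : ∀ (u : RTState α 𝒳), u.clk x = c → RT.T x c u = u := by
    intro u hu
    have hfun : (fun y => if y = x then c else u.clk y) = u.clk := by
      funext y
      by_cases hy : y = x
      · subst hy; simp [hu]
      · simp [hy]
    show (⟨u.core, fun y => if y = x then c else u.clk y⟩ : RTState α 𝒳) = u
    rw [hfun]
  -- no witness at any level m ≤ n, from h2
  have hnot : ∀ m : ℕ, m ≤ n →
      ¬ ∃ τ ∈ RT.ENS NextI, τ 0 = RT.ET x (c - m) s' ∧
        RT.ETb x (c - m - 1) τ ∉ RT.ENS NextI := by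
    intro m hmn hw
    have hle : RT.nfun NextI x s' ≤ (m : ℕ∞) := by
      apply sInf_le
      exact ⟨m, hw, rfl⟩
    have hle2 : RT.nfun NextI x s' ≤ (n : ℕ∞) :=
      hle.trans (by exact_mod_cast hmn)
    exact absurd h2 (not_lt.mpr hle2)
  -- the translated internal step remains a valid step or stutter, by induction
  have step : ∀ m : ℕ, m ≤ n →
      (NextI (RT.T x (c - m) s'.st) (RT.T x (c - m) t'.st) ∨
        RT.ET x (c - m) t' = RT.ET x (c - m) s') := by
    intro m
    induction m with
    | zero =>
      intro _
      left
      have hs : RT.T x (c - 0) s'.st = s'.st := by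
        rw [Nat.sub_zero]; exact Teq s'.st rfl
      have ht : RT.T x (c - 0) t'.st = t'.st := by
        rw [Nat.sub_zero]; exact Teq t'.st hclk
      rw [hs, ht]; exact hN
    | succ m ih =>
      intro hmn
      have hm' : m ≤ n := Nat.le_of_succ_le hmn
      have hstep := ih hm'
      -- the behavior: ET x (c-m) s', then constantly ET x (c-m) t'
      set ρ : ℕ → RTEState α 𝒳 :=
        fun i => if i = 0 then RT.ET x (c - m) s' else RT.ET x (c - m) t' with hρ
      have hρENS : ρ ∈ RT.ENS NextI := by
        intro i
        cases i with
        | zero =>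
          rcases hstep with hst | hst
          · left
            refine ⟨hst, ?_⟩
            intro y
            simp [hρ, RT.ET, hm y]
          · right
            simp [hρ, hst]
        | succ j =>
          right
          simp [hρ]
      by_contra hcon
      push_neg at hcon
      obtain ⟨hA, hB⟩ := hcon
      apply hnot m hm'
      refine ⟨ρ, hρENS, by simp [hρ], ?_⟩
      intro hmem
      have h0 := hmem 0
      have e0 : RT.ETb x (c - m - 1) ρ 0 = RT.ET x (c - (m + 1)) s' := by
        simp only [RT.ETb, hρ, if_pos rfl]
        rw [ETcomp, Nat.sub_sub]
      have e1 : RT.ETb x (c - m - 1) ρ 1 = RT.ET x (c - (m + 1)) t' := by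
        simp only [RT.ETb, hρ, if_neg one_ne_zero]
        rw [ETcomp, Nat.sub_sub]
      rw [e0, e1] at h0
      rcases h0 with hcase | hcase
      · exact hA hcase.1
      · exact hB hcase
  -- now prepend ET x (c-n) s' to σ
  have hstepn := step n le_rfl
  set τ : ℕ → RTEState α 𝒳 :=
    fun i => if i = 0 then RT.ET x (c - n) s' else σ (i - 1) with hτ
  have hτENS : τ ∈ RT.ENS NextI := by
    intro i
    cases i with
    | zero =>
      have hτ1 : τ 1 = RT.ET x (c - n) t' := by
        simp [hτ, hσ0]
      rcases hstepn with hst | hst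
      · left
        refine ?_
        rw [hτ1]
        show RT.ENextI NextI (RT.ET x (c - n) s') (RT.ET x (c - n) t')
        exact ⟨hst, fun y => by simp [RT.ET, hm y]⟩
      · right
        rw [hτ1, hst]
        simp [hτ]
    | succ j =>
      have ha : τ (j + 1) = σ j := by simp [hτ]
      have hb : τ (j + 1 + 1) = σ (j + 1) := by simp [hτ]
      rw [ha, hb]
      exact hσ j
  by_contra hcon
  apply hnot n le_rfl
  refine ⟨τ, hτENS, by simp [hτ], ?_⟩
  intro hmem
  apply hcon
  intro i
  have := hmem (i + 1)
  have ha : RT.ETb x (c - n - 1) τ (i + 1) = RT.ETb x (c - n - 1) σ i := by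
    simp [RT.ETb, hτ]
  have hb : RT.ETb x (c - n - 1) τ (i + 1 + 1) = RT.ETb x (c - n - 1) σ (i + 1) := by
    simp [RT.ETb, hτ]
  rw [ha, hb] at this
  exact this
end

section
/- Mapped clocks never exceed the actual clocks: every reachable extended state s' satisfies s'.m^x ≤ s'.x for every clock x. -/
open scoped Classical

universe u v

theorem mapped_clocks_le_actual_clocks {α : Type u} {𝒳 : Type v}
    (Init : Set (RTState α 𝒳)) (NextI : RTState α 𝒳 → RTState α 𝒳 → Prop)
    (B relETP : 𝒳 → RTState α 𝒳 → Set ℕ)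
    (hClk : ∀ s t, NextI s t → ∀ x, t.clk x = s.clk x)
    (s' : RTEState α 𝒳) (h : RT.EReachable Init NextI B relETP s') :
    ∀ x, s'.m x ≤ s'.st.clk x := by
  obtain ⟨i, hi, hsteps⟩ := h
  induction hsteps with
  | refl => intro x; exact (hi.2 x).le
  | tail _ hstep ih =>
    rename_i b c _
    intro x
    rcases hstep with hN | hA | hstut
    · rw [hN.2 x, hClk _ _ hN.1 x]; exact ih x
    · rw [hA.2 x]
      apply csSup_le ⟨b.m x, Or.inl rfl⟩
      intro n hn
      rcases hn with hn | hn
      · rw [Set.mem_singleton_iff] at hn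
        subst hn
        calc b.m x ≤ b.st.clk x := ih x
          _ ≤ c.st.clk x := by rw [hA.1.2.1 x]; omega
      · exact hn.2
    · subst hstut; exact ih x
end
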